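/- Quantum partition of identity indexed by stopping times: let H be a complex Hilbert space, K ≥ 1 an integer, (P_i)_{i=1}^K bounded operators on H with ∑_{i=1}^K P_i^* P_i = Id_H, and V a unitary operator on H; for an integer m set P_i(m) := V^{−m} P_i V^{m}. Let f be a function on {1,…,K}² with 0 < a ≤ f ≤ b and let T ≥ b. For a word α = (α₀,…,α_k) define τ_α := P_{α_k}(k) P_{α_{k−1}}(k−1) ⋯ P_{α_1}(1) P_{α_0}. Then ∑_{α ∈ I(T)} τ_α^* τ_α = Id_H (the sum being finite). -/

import Mathlib

/-- Heisenberg evolution `P(m) := V^{-m} P V^{m}` of a bounded operator `P` under a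
unitary `V` (for a unitary `V` one has `V⁻¹ = star V = V^*`). -/
noncomputable def heis {H : Type*} [NormedAddCommGroup H] [InnerProductSpace ℂ H]
    [CompleteSpace H] (V P : H →L[ℂ] H) (m : ℕ) : H →L[ℂ] H :=
  (star V) ^ m * P * V ^ m

/-- The operator `τ_α := P_{α_k}(k) P_{α_{k-1}}(k-1) ⋯ P_{α_1}(1) P_{α_0}` attached to the
word `(α₀, …, α_k)` (encoded by `k` and a sequence `α : ℕ → Fin K` of letters). -/
noncomputable def tauWord {H : Type*} [NormedAddCommGroup H] [InnerProductSpace ℂ H]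
    [CompleteSpace H] {K : ℕ} (V : H →L[ℂ] H) (P : Fin K → H →L[ℂ] H)
    (α : ℕ → Fin K) : ℕ → (H →L[ℂ] H)
  | 0 => P (α 0)
  | (k + 1) => heis V (P (α (k + 1))) (k + 1) * tauWord V P α k

/-- A word `l = (α₀, …, α_k)` (a list of length `k + 1`, indexed with default letter `d`)
belongs to the stopping-time index set `I(T)` if `k ≥ 3`,
`∑_{i=1}^{k-2} f (α_i) (α_{i+1}) ≤ T` and `T < ∑_{i=1}^{k-1} f (α_i) (α_{i+1})`. -/
def memIword {K : ℕ} (f : Fin K → Fin K → ℝ) (T : ℝ) (d : Fin K) (l : List (Fin K)) : Prop :=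
  4 ≤ l.length ∧
    (∑ i ∈ Finset.Icc 1 (l.length - 3), f (l.getD i d) (l.getD (i + 1) d)) ≤ T ∧
    T < ∑ i ∈ Finset.Icc 1 (l.length - 2), f (l.getD i d) (l.getD (i + 1) d)

section Aux

open Finset

variable {H : Type*} [NormedAddCommGroup H] [InnerProductSpace ℂ H] [CompleteSpace H]
variable {K : ℕ} (V : H →L[ℂ] H) (P : Fin K → H →L[ℂ] H)

/-- `τ` attached to a list. -/
noncomputable def tauL (d : Fin K) (l : List (Fin K)) : H →L[ℂ] H :=
  tauWord V P (fun i => l.getD i d) (l.length - 1)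

/-- `τ^* τ` attached to a list. -/
noncomputable def TT (d : Fin K) (l : List (Fin K)) : H →L[ℂ] H :=
  star (tauL V P d l) * tauL V P d l

lemma tauWord_congr {α β : ℕ → Fin K} (k : ℕ) (h : ∀ i ≤ k, α i = β i) :
    tauWord V P α k = tauWord V P β k := by
  induction k with
  | zero => simp only [tauWord, h 0 le_rfl]
  | succ k ih =>
      simp only [tauWord, h (k + 1) le_rfl,
        ih (fun i hi => h i (hi.trans (Nat.le_succ k)))]

lemma heis_sum (hP : ∑ i : Fin K, star (P i) * P i = 1)
    (hV : V ∈ unitary (H →L[ℂ] H)) (m : ℕ) :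
    ∑ j : Fin K, star (heis V (P j) m) * heis V (P j) m = 1 := by
  have hm : V ^ m ∈ unitary (H →L[ℂ] H) := pow_mem hV m
  have h1 : star (V ^ m) * V ^ m = 1 := (Unitary.mem_iff.mp hm).1
  have h2 : V ^ m * star (V ^ m) = 1 := (Unitary.mem_iff.mp hm).2
  have key : ∀ j : Fin K, star (heis V (P j) m) * heis V (P j) m
      = star (V ^ m) * ((star (P j) * P j) * V ^ m) := by
    intro j
    have e : heis V (P j) m = star (V ^ m) * P j * V ^ m := by
      rw [heis, star_pow]
    rw [e, star_mul, star_mul, star_star]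
    simp only [mul_assoc]
    rw [← mul_assoc (V ^ m) (star (V ^ m)), h2, one_mul]
  calc ∑ j : Fin K, star (heis V (P j) m) * heis V (P j) m
      = ∑ j : Fin K, star (V ^ m) * ((star (P j) * P j) * V ^ m) :=
        Finset.sum_congr rfl fun j _ => key j
    _ = star (V ^ m) * ((∑ j : Fin K, star (P j) * P j) * V ^ m) := by
        rw [← Finset.mul_sum, ← Finset.sum_mul]
    _ = 1 := by rw [hP, one_mul, h1]

lemma tauL_append (d : Fin K) (l : List (Fin K)) (hl : l ≠ []) (j : Fin K) :
    tauL V P d (l ++ [j]) = heis V (P j) l.length * tauL V P d l := by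
  obtain ⟨n, hn⟩ : ∃ n, l.length = n + 1 :=
    ⟨l.length - 1, (Nat.succ_pred_eq_of_pos (List.length_pos_iff.mpr hl)).symm⟩
  have hlen : (l ++ [j]).length = n + 2 := by simp [hn]
  have hgetD : (l ++ [j]).getD (n + 1) d = j := by
    rw [List.getD_append_right] <;> simp [hn]
  have hsame : ∀ i ≤ n, (l ++ [j]).getD i d = l.getD i d := by
    intro i hi
    exact List.getD_append _ _ _ _ (by omega)
  have goalLHS : tauL V P d (l ++ [j])
      = heis V (P ((l ++ [j]).getD (n + 1) d)) (n + 1)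
        * tauWord V P (fun i => (l ++ [j]).getD i d) n := by
    simp only [tauL, hlen]
    rfl
  have hn1 : l.length - 1 = n := by omega
  rw [goalLHS, hgetD, tauWord_congr V P n hsame]
  simp only [tauL, hn1, hn, Nat.add_sub_cancel]

lemma sum_TT_image (hP : ∑ i : Fin K, star (P i) * P i = 1)
    (hV : V ∈ unitary (H →L[ℂ] H)) (d : Fin K) (A : Finset (List (Fin K)))
    (hA : ∀ l ∈ A, l ≠ []) :
    ∑ l ∈ (A ×ˢ (Finset.univ : Finset (Fin K))).image (fun p => p.1 ++ [p.2]),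
        TT V P d l = ∑ l ∈ A, TT V P d l := by
  classical
  rw [Finset.sum_image]
  · rw [Finset.sum_product]
    refine Finset.sum_congr rfl fun l hl => ?_
    have hne := hA l hl
    calc ∑ j : Fin K, TT V P d (l ++ [j])
        = ∑ j : Fin K, star (tauL V P d l)
            * ((star (heis V (P j) l.length) * heis V (P j) l.length)
              * tauL V P d l) := by
          refine Finset.sum_congr rfl fun j _ => ?_
          simp only [TT, tauL_append V P d l hne j, star_mul]
          simp only [mul_assoc]
      _ = star (tauL V P d l)
            * ((∑ j : Fin K, star (heis V (P j) l.length) * heis V (P j) l.length)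
                * tauL V P d l) := by
          rw [← Finset.mul_sum, ← Finset.sum_mul]
      _ = TT V P d l := by
          rw [heis_sum V P hP hV, one_mul]
          rfl
  · intro p _ q _ h
    have h' : p.1.concat p.2 = q.1.concat q.2 := by
      simpa [List.concat_eq_append] using h
    obtain ⟨h1, h2⟩ := List.concat_inj.mp h'
    exact Prod.ext h1 h2

/-- The finset of all words of length `n` over `Fin K`. -/
def Wn (K : ℕ) : ℕ → Finset (List (Fin K))
  | 0 => {([] : List (Fin K))}
  | (n + 1) => ((Wn K n) ×ˢ (Finset.univ : Finset (Fin K))).image fun p => p.1 ++ [p.2]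

lemma mem_Wn (K : ℕ) (n : ℕ) (l : List (Fin K)) : l ∈ Wn K n ↔ l.length = n := by
  induction n generalizing l with
  | zero => simp [Wn, List.length_eq_zero_iff]
  | succ n ih =>
      rw [show Wn K (n + 1)
          = ((Wn K n) ×ˢ (Finset.univ : Finset (Fin K))).image (fun p => p.1 ++ [p.2])
          from rfl, Finset.mem_image]
      constructor
      · rintro ⟨p, hp, rfl⟩
        have := (ih p.1).mp (Finset.mem_product.mp hp).1
        simp [this]
      · intro hl
        have hne : l ≠ [] := by intro h; simp [h] at hl
        refine ⟨(l.dropLast, l.getLast hne), ?_, List.dropLast_append_getLast hne⟩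
        rw [Finset.mem_product]
        exact ⟨(ih _).mpr (by simp [List.length_dropLast, hl]), Finset.mem_univ _⟩

lemma sum_TT_Wn (hP : ∑ i : Fin K, star (P i) * P i = 1)
    (hV : V ∈ unitary (H →L[ℂ] H)) (d : Fin K) (n : ℕ) :
    ∑ l ∈ Wn K (n + 1), TT V P d l = 1 := by
  classical
  induction n with
  | zero =>
      have hW1 : Wn K 1 = Finset.univ.image (fun j : Fin K => [j]) := by
        ext l
        rw [mem_Wn, Finset.mem_image]
        simp [List.length_eq_one_iff, eq_comm]
      rw [hW1, Finset.sum_image (by intro x _ y _ h; simpa using h)]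
      have hTT : ∀ j : Fin K, TT V P d [j] = star (P j) * P j := fun j => rfl
      simp only [hTT]
      exact hP
  | succ n ih =>
      rw [show Wn K (n + 2)
          = ((Wn K (n + 1)) ×ˢ (Finset.univ : Finset (Fin K))).image (fun p => p.1 ++ [p.2])
          from rfl,
        sum_TT_image V P hP hV d _ (fun l hl => by
          have := (mem_Wn K (n + 1) l).mp hl
          intro h; simp [h] at this), ih]

variable (f : Fin K → Fin K → ℝ)

/-- `∑_{i=1}^{k-1} f(α_i, α_{i+1})` for a word of length `k+1`. -/
noncomputable def Sfull (d : Fin K) (l : List (Fin K)) : ℝ :=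
  ∑ i ∈ Finset.Icc 1 (l.length - 2), f (l.getD i d) (l.getD (i + 1) d)

/-- `∑_{i=1}^{k-2} f(α_i, α_{i+1})` for a word of length `k+1`. -/
noncomputable def Spre (d : Fin K) (l : List (Fin K)) : ℝ :=
  ∑ i ∈ Finset.Icc 1 (l.length - 3), f (l.getD i d) (l.getD (i + 1) d)

lemma Spre_append (d : Fin K) (l : List (Fin K)) (j : Fin K) (hl : 2 ≤ l.length) :
    Spre f d (l ++ [j]) = Sfull f d l := by
  simp only [Spre, Sfull, List.length_append, List.length_singleton]
  have h3 : l.length + 1 - 3 = l.length - 2 := by omega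
  rw [h3]
  refine Finset.sum_congr rfl fun i hi => ?_
  rw [Finset.mem_Icc] at hi
  rw [List.getD_append l [j] d i (by omega), List.getD_append l [j] d (i + 1) (by omega)]

lemma Spre_le_Sfull (d : Fin K) (hf0 : ∀ i j, 0 ≤ f i j) (l : List (Fin K)) :
    Spre f d l ≤ Sfull f d l :=
  Finset.sum_le_sum_of_subset_of_nonneg
    (Finset.Icc_subset_Icc_right (by omega)) (fun i _ _ => hf0 _ _)

lemma Sfull_ge (d : Fin K) (a : ℝ) (hfa : ∀ i j, a ≤ f i j) (l : List (Fin K)) :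
    ((l.length - 2 : ℕ) : ℝ) * a ≤ Sfull f d l := by
  have := Finset.card_nsmul_le_sum (Finset.Icc 1 (l.length - 2))
    (fun i => f (l.getD i d) (l.getD (i + 1) d)) a (fun i _ => hfa _ _)
  rw [Nat.card_Icc] at this
  simpa [nsmul_eq_mul, Sfull] using this

lemma Spre_ge (d : Fin K) (a : ℝ) (hfa : ∀ i j, a ≤ f i j) (l : List (Fin K)) :
    ((l.length - 3 : ℕ) : ℝ) * a ≤ Spre f d l := by
  have := Finset.card_nsmul_le_sum (Finset.Icc 1 (l.length - 3))
    (fun i => f (l.getD i d) (l.getD (i + 1) d)) a (fun i _ => hfa _ _)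
  rw [Nat.card_Icc] at this
  simpa [nsmul_eq_mul, Spre] using this

end Aux

/-- **Quantum partition of identity indexed by stopping times.**
Let `(P_i)_{i=1}^K` be a partition of identity on a complex Hilbert space `H`, `V` a
unitary on `H`, `P_i(m) := V^{-m} P_i V^m`, `f` on `{1,…,K}²` with `0 < a ≤ f ≤ b`, and
`T ≥ b`. For a word `α = (α₀,…,α_k)` set `τ_α := P_{α_k}(k) ⋯ P_{α_1}(1) P_{α_0}`. Then
`∑_{α ∈ I(T)} τ_α^* τ_α = Id_H`, the sum being finite. -/
theorem quantum_partition_of_identity_stopping_times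
    {H : Type*} [NormedAddCommGroup H] [InnerProductSpace ℂ H] [CompleteSpace H]
    {K : ℕ} (hK : 0 < K)
    (P : Fin K → H →L[ℂ] H) (hP : ∑ i : Fin K, star (P i) * P i = 1)
    (V : H →L[ℂ] H) (hV : V ∈ unitary (H →L[ℂ] H))
    (a b : ℝ) (ha : 0 < a) (hab : a ≤ b)
    (f : Fin K → Fin K → ℝ) (hf : ∀ i j, a ≤ f i j ∧ f i j ≤ b)
    (T : ℝ) (hT : b ≤ T)
    (hfin : {l : List (Fin K) | memIword f T ⟨0, hK⟩ l}.Finite) :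
    ∑ l ∈ hfin.toFinset,
        star (tauWord V P (fun i => l.getD i ⟨0, hK⟩) (l.length - 1)) *
          tauWord V P (fun i => l.getD i ⟨0, hK⟩) (l.length - 1) = 1 := by
  classical
  set d : Fin K := ⟨0, hK⟩ with hd
  show ∑ l ∈ hfin.toFinset, TT V P d l = 1
  have hf0 : ∀ i j, (0 : ℝ) ≤ f i j := fun i j => ha.le.trans (hf i j).1
  have hfa : ∀ i j, a ≤ f i j := fun i j => (hf i j).1
  have hmemfin : ∀ l, l ∈ hfin.toFinset ↔ memIword f T d l := fun l => hfin.mem_toFinset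
  have hSpre4 : ∀ l : List (Fin K), l.length = 4 → Spre f d l ≤ T := by
    intro l hl
    have : Spre f d l = f (l.getD 1 d) (l.getD 2 d) := by
      simp [Spre, hl]
    rw [this]
    exact le_trans (hf _ _).2 hT
  have inv : ∀ N, 4 ≤ N →
      (∑ l ∈ hfin.toFinset.filter (fun l => l.length ≤ N), TT V P d l)
        + ∑ l ∈ (Wn K N).filter (fun l => Sfull f d l ≤ T), TT V P d l = 1 := by
    intro N hN
    induction N, hN using Nat.le_induction with
    | base =>
        have h1 : hfin.toFinset.filter (fun l => l.length ≤ 4)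
            = (Wn K 4).filter (fun l => memIword f T d l) := by
          ext l
          simp only [Finset.mem_filter, hmemfin l, mem_Wn]
          constructor
          · rintro ⟨hm, hle⟩; exact ⟨le_antisymm hle hm.1, hm⟩
          · rintro ⟨h4, hm⟩; exact ⟨hm, h4.le⟩
        have h2 : (Wn K 4).filter (fun l => ¬ memIword f T d l)
            = (Wn K 4).filter (fun l => Sfull f d l ≤ T) := by
          ext l
          simp only [Finset.mem_filter, mem_Wn]
          constructor
          · rintro ⟨h4, hn⟩
            refine ⟨h4, ?_⟩
            by_contra hc
            exact hn ⟨by omega, hSpre4 l h4, lt_of_not_ge hc⟩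
          · rintro ⟨h4, hS⟩
            exact ⟨h4, fun hm => absurd hm.2.2 (not_lt.mpr hS)⟩
        rw [h1, ← h2]
        exact (Finset.sum_filter_add_sum_filter_not (Wn K 4) _ _).trans
          (sum_TT_Wn V P hP hV d 3)
    | succ N hN ih =>
        -- image of live words of length N is the reachable words of length N+1
        have himg : (((Wn K N).filter (fun l => Sfull f d l ≤ T))
              ×ˢ (Finset.univ : Finset (Fin K))).image (fun p => p.1 ++ [p.2])
            = (Wn K (N + 1)).filter (fun l => Spre f d l ≤ T) := by
          ext l'
          rw [Finset.mem_image, Finset.mem_filter, mem_Wn]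
          constructor
          · rintro ⟨p, hp, rfl⟩
            obtain ⟨hp1, -⟩ := Finset.mem_product.mp hp
            rw [Finset.mem_filter, mem_Wn] at hp1
            refine ⟨by simp [hp1.1], ?_⟩
            rw [Spre_append f d p.1 p.2 (by omega)]
            exact hp1.2
          · rintro ⟨hlen, hS⟩
            have hne : l' ≠ [] := by intro h; simp [h] at hlen
            have hdl : l'.dropLast.length = N := by
              simp [List.length_dropLast, hlen]
            have heq : l'.dropLast ++ [l'.getLast hne] = l' :=
              List.dropLast_append_getLast hne
            have hSS : Spre f d l' = Sfull f d l'.dropLast := by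
              conv_lhs => rw [← heq]
              exact Spre_append f d _ _ (by omega)
            refine ⟨(l'.dropLast, l'.getLast hne), ?_, heq⟩
            rw [Finset.mem_product, Finset.mem_filter, mem_Wn]
            exact ⟨⟨hdl, by rw [← hSS]; exact hS⟩, Finset.mem_univ _⟩
        have hEsum : ∑ l ∈ (Wn K (N + 1)).filter (fun l => Spre f d l ≤ T), TT V P d l
            = ∑ l ∈ (Wn K N).filter (fun l => Sfull f d l ≤ T), TT V P d l := by
          rw [← himg]
          refine sum_TT_image V P hP hV d _ (fun l hl => ?_)
          rw [Finset.mem_filter, mem_Wn] at hl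
          intro h; rw [h] at hl; simp at hl; omega
        have hsplit1 : ((Wn K (N + 1)).filter (fun l => Spre f d l ≤ T)).filter
              (fun l => T < Sfull f d l)
            = (Wn K (N + 1)).filter (fun l => memIword f T d l) := by
          rw [Finset.filter_filter]
          ext l
          simp only [Finset.mem_filter, mem_Wn]
          constructor
          · rintro ⟨hlen, hS1, hS2⟩
            exact ⟨hlen, ⟨by omega, hS1, hS2⟩⟩
          · rintro ⟨hlen, hm⟩
            exact ⟨hlen, hm.2.1, hm.2.2⟩
        have hsplit2 : ((Wn K (N + 1)).filter (fun l => Spre f d l ≤ T)).filter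
              (fun l => ¬ T < Sfull f d l)
            = (Wn K (N + 1)).filter (fun l => Sfull f d l ≤ T) := by
          rw [Finset.filter_filter]
          ext l
          simp only [Finset.mem_filter, mem_Wn, not_lt]
          constructor
          · rintro ⟨hlen, -, hS2⟩
            exact ⟨hlen, hS2⟩
          · rintro ⟨hlen, hS⟩
            exact ⟨hlen, le_trans (Spre_le_Sfull f d hf0 l) hS, hS⟩
        have hEdecomp : ∑ l ∈ (Wn K (N + 1)).filter (fun l => Spre f d l ≤ T), TT V P d l
            = (∑ l ∈ (Wn K (N + 1)).filter (fun l => memIword f T d l), TT V P d l)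
              + ∑ l ∈ (Wn K (N + 1)).filter (fun l => Sfull f d l ≤ T), TT V P d l := by
          rw [← hsplit1, ← hsplit2]
          exact (Finset.sum_filter_add_sum_filter_not _ _ _).symm
        have hstople : hfin.toFinset.filter (fun l => l.length ≤ N + 1)
            = hfin.toFinset.filter (fun l => l.length ≤ N)
              ∪ (Wn K (N + 1)).filter (fun l => memIword f T d l) := by
          ext l
          simp only [Finset.mem_union, Finset.mem_filter, hmemfin l, mem_Wn]
          constructor
          · rintro ⟨hm, hle⟩
            rcases Nat.lt_or_ge l.length (N + 1) with h | h
            · exact Or.inl ⟨hm, by omega⟩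
            · exact Or.inr ⟨by omega, hm⟩
          · rintro (⟨hm, hle⟩ | ⟨hlen, hm⟩)
            · exact ⟨hm, by omega⟩
            · exact ⟨hm, by omega⟩
        have hdisj : Disjoint (hfin.toFinset.filter (fun l => l.length ≤ N))
            ((Wn K (N + 1)).filter (fun l => memIword f T d l)) := by
          rw [Finset.disjoint_left]
          intro l h1 h2
          rw [Finset.mem_filter] at h1 h2
          rw [mem_Wn] at h2
          omega
        rw [hstople, Finset.sum_union hdisj, add_assoc, ← hEdecomp, hEsum, ih]
  -- choose a length beyond which nothing is live
  set N : ℕ := ⌈T / a⌉₊ + 4 with hNdef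
  have hTa : T ≤ (⌈T / a⌉₊ : ℝ) * a := by
    have h := Nat.le_ceil (T / a)
    have := mul_le_mul_of_nonneg_right h ha.le
    rwa [div_mul_cancel₀ T (ne_of_gt ha)] at this
  have hLiveEmpty : (Wn K N).filter (fun l => Sfull f d l ≤ T) = ∅ := by
    rw [Finset.filter_eq_empty_iff]
    intro l hl
    have hlen := (mem_Wn K N l).mp hl
    intro hS
    have h1 := Sfull_ge f d a hfa l
    have h2 : (l.length - 2 : ℕ) = ⌈T / a⌉₊ + 2 := by omega
    rw [h2] at h1
    push_cast at h1
    have hcontr : ((⌈T / a⌉₊ : ℝ) + 2) * a ≤ (⌈T / a⌉₊ : ℝ) * a :=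
      le_trans (le_trans h1 hS) hTa
    have := le_of_mul_le_mul_right hcontr ha
    linarith
  have hStopAll : hfin.toFinset.filter (fun l => l.length ≤ N) = hfin.toFinset := by
    rw [Finset.filter_eq_self]
    intro l hl
    have hm : memIword f T d l := (hmemfin l).mp hl
    have h1 := Spre_ge f d a hfa l
    have h2 : Spre f d l ≤ T := hm.2.1
    have h3 : ((l.length - 3 : ℕ) : ℝ) * a ≤ (⌈T / a⌉₊ : ℝ) * a :=
      le_trans (le_trans h1 h2) hTa
    have h4 : (l.length - 3 : ℕ) ≤ ⌈T / a⌉₊ := by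
      exact_mod_cast le_of_mul_le_mul_right h3 ha
    omega
  have := inv N (by omega)
  rwa [hLiveEmpty, hStopAll, Finset.sum_empty, add_zero] at this
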